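/- Let G ∈ L¹(ℝ; L²(ℝⁿ)) satisfy e^{σt + ν·x}G ∈ L¹(ℝ × ℝⁿ) for all σ ∈ ℝ and all ν ∈ ℝⁿ with |ν| < c (e.g. G compactly supported in time with e^{c|x|}G ∈ L¹(ℝ; L²(ℝⁿ))). Suppose the entire-in-time extension Ĝ(γ, ξ′, ζ) of the Fourier transform satisfies Ĝ(−|ξ|², ξ) = 0 for all ξ ∈ ℝⁿ. Then Ĝ(−|ξ′|² − ζ², ξ′, ζ) = 0 for all ξ′ ∈ ℝ^{n−1} and all ζ ∈ ℂ with |Im ζ| < c. -/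

import Mathlib

open MeasureTheory Complex
open scoped RealInnerProductSpace

noncomputable section

/-- The extension `Ĝ(γ, ξ′, ζ)` of the space-time Fourier transform of
`G : ℝ × ℝ^{n+1} → ℂ`, holomorphic in the time frequency `γ` and in the last spatial
frequency `ζ`:
`Ĝ(γ, ξ′, ζ) = (2π)^{−(n+2)/2} ∫ e^{−i(γt + ξ′·x′ + ζ x_n)} G(t,x) d(t,x)`. -/
def GhatExt (n : ℕ) (G : ℝ × EuclideanSpace ℝ (Fin (n + 1)) → ℂ)
    (γ : ℂ) (ξ' : EuclideanSpace ℝ (Fin n)) (ζ : ℂ) : ℂ :=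
  (((2 * Real.pi) ^ (-(((n : ℝ) + 2) / 2)) : ℝ) : ℂ) *
    ∫ p : ℝ × EuclideanSpace ℝ (Fin (n + 1)),
      Complex.exp (-Complex.I *
        (γ * (p.1 : ℂ) + ((∑ i : Fin n, ξ' i * p.2 i.castSucc : ℝ) : ℂ)
          + ζ * ((p.2 (Fin.last n) : ℝ) : ℂ))) * G p

/-- The integrand of `GhatExt` along the parabola `γ = −|ξ′|² − ζ²`, as a function of `ζ`. -/
def fAux (n : ℕ) (G : ℝ × EuclideanSpace ℝ (Fin (n + 1)) → ℂ)
    (ξ' : EuclideanSpace ℝ (Fin n)) (ζ : ℂ) (p : ℝ × EuclideanSpace ℝ (Fin (n + 1))) : ℂ :=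
  Complex.exp (-Complex.I *
        ((-((‖ξ'‖ ^ 2 : ℝ) : ℂ) - ζ ^ 2) * (p.1 : ℂ) + ((∑ i : Fin n, ξ' i * p.2 i.castSucc : ℝ) : ℂ)
          + ζ * ((p.2 (Fin.last n) : ℝ) : ℂ))) * G p

/-- The `ζ`-derivative of `fAux`. -/
def fAux' (n : ℕ) (G : ℝ × EuclideanSpace ℝ (Fin (n + 1)) → ℂ)
    (ξ' : EuclideanSpace ℝ (Fin n)) (ζ : ℂ) (p : ℝ × EuclideanSpace ℝ (Fin (n + 1))) : ℂ :=
  (Complex.I * (2 * ζ * (p.1 : ℂ) - ((p.2 (Fin.last n) : ℝ) : ℂ))) * fAux n G ξ' ζ p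

lemma fAux_hasDerivAt (n : ℕ) (G : ℝ × EuclideanSpace ℝ (Fin (n + 1)) → ℂ)
    (ξ' : EuclideanSpace ℝ (Fin n)) (ζ : ℂ) (p : ℝ × EuclideanSpace ℝ (Fin (n + 1))) :
    HasDerivAt (fun z => fAux n G ξ' z p) (fAux' n G ξ' ζ p) ζ := by
  have h2 : HasDerivAt (fun z : ℂ => z ^ 2) (2 * ζ) ζ := by simpa using hasDerivAt_pow 2 ζ
  have h3 : HasDerivAt (fun z : ℂ => -((‖ξ'‖ ^ 2 : ℝ) : ℂ) - z ^ 2) (-(2 * ζ)) ζ :=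
    h2.const_sub _
  have h4 := ((h3.mul_const ((p.1 : ℝ) : ℂ)).add_const
      (((∑ i : Fin n, ξ' i * p.2 i.castSucc : ℝ) : ℂ))).add
      ((hasDerivAt_id ζ).mul_const ((p.2 (Fin.last n) : ℝ) : ℂ))
  have h8 := ((h4.const_mul (-Complex.I)).cexp).mul_const (G p)
  simp only [id_eq, Pi.add_apply] at h8
  refine h8.congr_deriv ?_
  unfold fAux' fAux
  ring

lemma fAux_norm (n : ℕ) (G : ℝ × EuclideanSpace ℝ (Fin (n + 1)) → ℂ)
    (ξ' : EuclideanSpace ℝ (Fin n)) (ζ : ℂ) (p : ℝ × EuclideanSpace ℝ (Fin (n + 1))) :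
    ‖fAux n G ξ' ζ p‖ =
      Real.exp (-(2 * ζ.re * ζ.im) * p.1 + ζ.im * p.2 (Fin.last n)) * ‖G p‖ := by
  unfold fAux
  rw [norm_mul, Complex.norm_exp]
  congr 2
  simp [Complex.add_re, Complex.mul_re, Complex.mul_im, Complex.sub_re, Complex.sub_im, pow_two]
  ring

lemma fAux_cont (n : ℕ) (ξ' : EuclideanSpace ℝ (Fin n)) (ζ : ℂ) :
    Continuous (fun p : ℝ × EuclideanSpace ℝ (Fin (n + 1)) => Complex.exp (-Complex.I *
        ((-((‖ξ'‖ ^ 2 : ℝ) : ℂ) - ζ ^ 2) * (p.1 : ℂ) + ((∑ i : Fin n, ξ' i * p.2 i.castSucc : ℝ) : ℂ)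
          + ζ * ((p.2 (Fin.last n) : ℝ) : ℂ)))) := by
  fun_prop

lemma est_aux (S y : ℝ) (hS : 0 ≤ S) :
    Real.exp (S * |y|) ≤ Real.exp (S * y) + Real.exp (-(S * y)) := by
  rcases abs_cases y with ⟨h, _⟩ | ⟨h, _⟩
  · rw [h]; linarith [Real.exp_pos (-(S * y))]
  · rw [h, mul_neg]; linarith [Real.exp_pos (S * y)]

lemma est (M δ b t x g nrm zre zim : ℝ) (hM : 0 ≤ M) (hδ : 0 < δ) (hb : 0 ≤ b)
    (hg : 0 ≤ g) (hnrm0 : 0 ≤ nrm)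
    (h1 : |zre| ≤ M) (h2 : |zim| ≤ M) (h3 : |zim| ≤ b)
    (hnrm : nrm ≤ 2 * M * |t| + |x|) :
    nrm * (Real.exp (-(2 * zre * zim) * t + zim * x) * g) ≤
      (2 * M + δ⁻¹) * ((Real.exp ((2 * M ^ 2 + 1) * t) + Real.exp (-((2 * M ^ 2 + 1) * t))) *
        ((Real.exp ((b + δ) * x) + Real.exp (-((b + δ) * x))) * g)) := by
  have ht := abs_nonneg t
  have hx := abs_nonneg x
  have hδx : 0 ≤ δ * |x| := mul_nonneg hδ.le hx
  have hexp0 : |t| + δ * |x| ≤ Real.exp (|t| + δ * |x|) := by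
    have := Real.add_one_le_exp (|t| + δ * |x|); linarith
  have hexp1 : |t| ≤ Real.exp (|t| + δ * |x|) := by linarith
  have hexp2 : |x| ≤ δ⁻¹ * Real.exp (|t| + δ * |x|) := by
    have h5 : δ * |x| ≤ Real.exp (|t| + δ * |x|) := by linarith
    calc |x| = δ⁻¹ * (δ * |x|) := by field_simp
      _ ≤ δ⁻¹ * Real.exp (|t| + δ * |x|) :=
          mul_le_mul_of_nonneg_left h5 (by positivity)
  have key1 : nrm ≤ (2 * M + δ⁻¹) * Real.exp (|t| + δ * |x|) := by
    calc nrm ≤ 2 * M * |t| + |x| := hnrm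
      _ ≤ 2 * M * Real.exp (|t| + δ * |x|) + δ⁻¹ * Real.exp (|t| + δ * |x|) :=
          add_le_add (by nlinarith) hexp2
      _ = (2 * M + δ⁻¹) * Real.exp (|t| + δ * |x|) := by ring
  have key2 : Real.exp (-(2 * zre * zim) * t + zim * x) ≤
      Real.exp (2 * M ^ 2 * |t| + b * |x|) := by
    apply Real.exp_le_exp.mpr
    have e1 : -(2 * zre * zim) * t ≤ 2 * M ^ 2 * |t| := by
      have hmm : |zre| * |zim| ≤ M ^ 2 := by
        calc |zre| * |zim| ≤ M * M := mul_le_mul h1 h2 (abs_nonneg zim) hM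
          _ = M ^ 2 := (pow_two M).symm
      calc -(2 * zre * zim) * t ≤ |(-(2 * zre * zim)) * t| := le_abs_self _
        _ = |(2:ℝ)| * |zre| * |zim| * |t| := by rw [abs_mul, abs_neg, abs_mul, abs_mul]
        _ = 2 * (|zre| * |zim|) * |t| := by rw [show |(2:ℝ)| = 2 from abs_two]; ring
        _ ≤ 2 * M ^ 2 * |t| := by nlinarith [mul_le_mul_of_nonneg_right hmm ht]
    have e2 : zim * x ≤ b * |x| := by
      calc zim * x ≤ |zim * x| := le_abs_self _
        _ = |zim| * |x| := abs_mul _ _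
        _ ≤ b * |x| := mul_le_mul_of_nonneg_right h3 hx
    linarith
  have hpos1 : (0:ℝ) ≤ Real.exp (-(2 * zre * zim) * t + zim * x) * g :=
    mul_nonneg (Real.exp_pos _).le hg
  have hpos2 : (0:ℝ) ≤ (2 * M + δ⁻¹) * Real.exp (|t| + δ * |x|) := by positivity
  calc nrm * (Real.exp (-(2 * zre * zim) * t + zim * x) * g)
      ≤ ((2 * M + δ⁻¹) * Real.exp (|t| + δ * |x|)) *
        (Real.exp (2 * M ^ 2 * |t| + b * |x|) * g) :=
        mul_le_mul key1 (mul_le_mul_of_nonneg_right key2 hg) hpos1 hpos2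
    _ = (2 * M + δ⁻¹) * (Real.exp ((|t| + δ * |x|) + (2 * M ^ 2 * |t| + b * |x|)) * g) := by
        rw [Real.exp_add (|t| + δ * |x|) (2 * M ^ 2 * |t| + b * |x|)]; ring
    _ = (2 * M + δ⁻¹) * (Real.exp ((2 * M ^ 2 + 1) * |t| + (b + δ) * |x|) * g) := by
        have harg : (|t| + δ * |x|) + (2 * M ^ 2 * |t| + b * |x|) =
            (2 * M ^ 2 + 1) * |t| + (b + δ) * |x| := by ring
        rw [harg]
    _ ≤ (2 * M + δ⁻¹) * ((Real.exp ((2 * M ^ 2 + 1) * t) + Real.exp (-((2 * M ^ 2 + 1) * t))) *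
        ((Real.exp ((b + δ) * x) + Real.exp (-((b + δ) * x))) * g)) := by
        apply mul_le_mul_of_nonneg_left ?_ (by positivity)
        rw [Real.exp_add, ← mul_assoc]
        apply mul_le_mul_of_nonneg_right ?_ hg
        exact mul_le_mul (est_aux _ _ (by positivity)) (est_aux _ _ (by positivity))
          (Real.exp_pos _).le (by positivity)

set_option maxHeartbeats 1000000 in
/-- let `G` satisfy `e^{σt + ν·x} G ∈ L¹(ℝ × ℝ^{n+1})` for all `σ ∈ ℝ` and all
`ν` with `|ν| < c`. If `Ĝ(−|ξ|², ξ) = 0` for all real frequencies `ξ = (ξ′, ξ_n)`, then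
`Ĝ(−|ξ′|² − ζ², ξ′, ζ) = 0` for all `ξ′ ∈ ℝⁿ` and all `ζ ∈ ℂ` with `|Im ζ| < c`. -/
theorem stmt18 (n : ℕ) (c : ℝ) (hc : 0 < c)
    (G : ℝ × EuclideanSpace ℝ (Fin (n + 1)) → ℂ)
    (hmeas : AEStronglyMeasurable G
      (volume : Measure (ℝ × EuclideanSpace ℝ (Fin (n + 1)))))
    (hint : ∀ σ : ℝ, ∀ ν : EuclideanSpace ℝ (Fin (n + 1)), ‖ν‖ < c →
      Integrable (fun p : ℝ × EuclideanSpace ℝ (Fin (n + 1)) =>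
        ((Real.exp (σ * p.1 + ⟪ν, p.2⟫) : ℝ) : ℂ) * G p)
        (volume : Measure (ℝ × EuclideanSpace ℝ (Fin (n + 1)))))
    (hvanish : ∀ (ξ' : EuclideanSpace ℝ (Fin n)) (ξn : ℝ),
      GhatExt n G ((-(‖ξ'‖ ^ 2 + ξn ^ 2) : ℝ) : ℂ) ξ' (ξn : ℂ) = 0) :
    ∀ (ξ' : EuclideanSpace ℝ (Fin n)) (ζ : ℂ), |ζ.im| < c →
      GhatExt n G (-((‖ξ'‖ ^ 2 : ℝ) : ℂ) - ζ ^ 2) ξ' ζ = 0 := by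
  intro ξ' ζ₀ hζ₀
  -- integrability of the elementary exponential majorants
  have hInt : ∀ s v : ℝ, |v| < c →
      Integrable (fun p : ℝ × EuclideanSpace ℝ (Fin (n + 1)) =>
        Real.exp (s * p.1 + v * p.2 (Fin.last n)) * ‖G p‖) volume := by
    intro s v hv
    have hν : ‖(EuclideanSpace.single (Fin.last n) v : EuclideanSpace ℝ (Fin (n + 1)))‖ < c := by
      rw [EuclideanSpace.norm_single]; simpa using hv
    have h := (hint s _ hν).norm
    refine h.congr (Filter.Eventually.of_forall fun p => ?_)
    show ‖_ * G p‖ = _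
    rw [norm_mul]
    simp only [EuclideanSpace.inner_single_left, starRingEnd_apply, star_trivial,
      Complex.norm_real, Real.norm_eq_abs, Real.abs_exp]
  -- measurability
  have hm : ∀ ζ : ℂ, AEStronglyMeasurable (fun p => fAux n G ξ' ζ p) volume := fun ζ =>
    ((fAux_cont n ξ' ζ).aestronglyMeasurable).mul hmeas
  have hm' : ∀ ζ : ℂ, AEStronglyMeasurable (fun p => fAux' n G ξ' ζ p) volume := by
    intro ζ
    have hcont : Continuous (fun p : ℝ × EuclideanSpace ℝ (Fin (n + 1)) =>
        Complex.I * (2 * ζ * (p.1 : ℂ) - ((p.2 (Fin.last n) : ℝ) : ℂ))) := by fun_prop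
    exact hcont.aestronglyMeasurable.mul (hm ζ)
  -- the key differentiability statement
  have key : ∀ ζc : ℂ, |ζc.im| < c →
      HasDerivAt (fun z => ∫ p, fAux n G ξ' z p) (∫ p, fAux' n G ξ' ζc p) ζc := by
    intro ζc hζc
    set ε : ℝ := (c - |ζc.im|) / 2 with hεdef
    have hεpos : 0 < ε := by
      have : 0 < c - |ζc.im| := by linarith
      positivity
    set b : ℝ := |ζc.im| + ε with hbdef
    have hb0 : 0 ≤ b := by positivity
    have hbc : b < c := by rw [hbdef, hεdef]; linarith
    set δ : ℝ := (c - b) / 2 with hδdef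
    have hδpos : 0 < δ := by rw [hδdef]; linarith
    have hBc : b + δ < c := by rw [hδdef]; linarith
    have hB0 : 0 < b + δ := by linarith
    set M : ℝ := ‖ζc‖ + ε with hMdef
    have hM0 : 0 ≤ M := by positivity
    have hbd : ∀ z ∈ Metric.ball ζc ε, ‖z‖ ≤ M ∧ |z.im| ≤ b := by
      intro z hz
      rw [Metric.mem_ball, Complex.dist_eq] at hz
      have him : |(z - ζc).im| ≤ ‖z - ζc‖ := by
        exact Complex.abs_im_le_norm _
      constructor
      · calc ‖z‖ = ‖ζc + (z - ζc)‖ := by congr 1; ring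
          _ ≤ ‖ζc‖ + ‖z - ζc‖ := norm_add_le _ _
          _ ≤ ‖ζc‖ + ε := by linarith
          _ = M := hMdef.symm
      · calc |z.im| = |ζc.im + (z - ζc).im| := by simp [Complex.sub_im]
          _ ≤ |ζc.im| + |(z - ζc).im| := abs_add_le _ _
          _ ≤ |ζc.im| + ε := by linarith
          _ = b := hbdef.symm
    -- the dominating function
    have hbound_int : Integrable (fun p : ℝ × EuclideanSpace ℝ (Fin (n + 1)) =>
        (2 * M + δ⁻¹) * ((Real.exp ((2 * M ^ 2 + 1) * p.1) + Real.exp (-((2 * M ^ 2 + 1) * p.1))) *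
          ((Real.exp ((b + δ) * p.2 (Fin.last n)) + Real.exp (-((b + δ) * p.2 (Fin.last n)))) *
            ‖G p‖))) volume := by
      have habs : |b + δ| < c := by rw [abs_of_pos hB0]; exact hBc
      have h1 := hInt (2 * M ^ 2 + 1) (b + δ) habs
      have h2 := hInt (2 * M ^ 2 + 1) (-(b + δ)) (by rwa [abs_neg])
      have h3 := hInt (-(2 * M ^ 2 + 1)) (b + δ) habs
      have h4 := hInt (-(2 * M ^ 2 + 1)) (-(b + δ)) (by rwa [abs_neg])
      have hsum := (((h1.add h2).add (h3.add h4)).const_mul (2 * M + δ⁻¹))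
      refine hsum.congr (Filter.Eventually.of_forall fun p => ?_)
      simp only [Pi.add_apply, Real.exp_add, neg_mul]
      ring
    have hF_int : Integrable (fun p => fAux n G ξ' ζc p) volume := by
      apply Integrable.mono' (hInt (-(2 * ζc.re * ζc.im)) ζc.im hζc) (hm ζc)
      filter_upwards with p
      rw [fAux_norm]
    have h_bound : ∀ᵐ p : ℝ × EuclideanSpace ℝ (Fin (n + 1)) ∂volume,
        ∀ z ∈ Metric.ball ζc ε, ‖fAux' n G ξ' z p‖ ≤
          (2 * M + δ⁻¹) * ((Real.exp ((2 * M ^ 2 + 1) * p.1) + Real.exp (-((2 * M ^ 2 + 1) * p.1))) *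
            ((Real.exp ((b + δ) * p.2 (Fin.last n)) + Real.exp (-((b + δ) * p.2 (Fin.last n)))) *
              ‖G p‖)) := by
      filter_upwards with p
      intro z hz
      obtain ⟨hzM, hzb⟩ := hbd z hz
      have hre : |z.re| ≤ M := le_trans (Complex.abs_re_le_norm z) hzM
      have him : |z.im| ≤ M := le_trans (Complex.abs_im_le_norm z) hzM
      have hnrm : ‖Complex.I * (2 * z * (p.1 : ℂ) - ((p.2 (Fin.last n) : ℝ) : ℂ))‖ ≤
          2 * M * |p.1| + |p.2 (Fin.last n)| := by
        rw [norm_mul, Complex.norm_I, one_mul]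
        calc ‖2 * z * (p.1 : ℂ) - ((p.2 (Fin.last n) : ℝ) : ℂ)‖
            ≤ ‖2 * z * (p.1 : ℂ)‖ + ‖((p.2 (Fin.last n) : ℝ) : ℂ)‖ := norm_sub_le _ _
          _ = 2 * ‖z‖ * |p.1| + |p.2 (Fin.last n)| := by
              simp [norm_mul, Complex.norm_real, Real.norm_eq_abs]
          _ ≤ 2 * M * |p.1| + |p.2 (Fin.last n)| := by
              have := abs_nonneg p.1
              nlinarith [norm_nonneg z]
      have hest := est M δ b p.1 (p.2 (Fin.last n)) ‖G p‖
        ‖Complex.I * (2 * z * (p.1 : ℂ) - ((p.2 (Fin.last n) : ℝ) : ℂ))‖ z.re z.im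
        hM0 hδpos hb0 (norm_nonneg _) (norm_nonneg _) hre him hzb hnrm
      calc ‖fAux' n G ξ' z p‖
          = ‖Complex.I * (2 * z * (p.1 : ℂ) - ((p.2 (Fin.last n) : ℝ) : ℂ))‖ *
            (Real.exp (-(2 * z.re * z.im) * p.1 + z.im * p.2 (Fin.last n)) * ‖G p‖) := by
            rw [fAux', norm_mul, fAux_norm]
        _ ≤ _ := hest
    have h_diff : ∀ᵐ p : ℝ × EuclideanSpace ℝ (Fin (n + 1)) ∂volume,
        ∀ z ∈ Metric.ball ζc ε, HasDerivAt (fun w => fAux n G ξ' w p) (fAux' n G ξ' z p) z := by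
      filter_upwards with p
      intro z _
      exact fAux_hasDerivAt n G ξ' z p
    exact (hasDerivAt_integral_of_dominated_loc_of_deriv_le (Metric.ball_mem_nhds ζc hεpos)
      (Filter.Eventually.of_forall fun z => hm z) hF_int (hm' ζc)
      h_bound hbound_int h_diff).2
  -- identity theorem on the strip
  set U : Set ℂ := {z : ℂ | |z.im| < c} with hU
  have hUeq : U = Complex.imLm ⁻¹' Set.Ioo (-c) c := by
    ext z
    simp [hU, abs_lt, Set.mem_Ioo, Complex.imLm]
  have hUopen : IsOpen U := by
    rw [hUeq]
    exact isOpen_Ioo.preimage Complex.continuous_im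
  have hUconv : Convex ℝ U := by
    rw [hUeq]
    exact (convex_Ioo _ _).linear_preimage _
  have hUdiff : DifferentiableOn ℂ
      (fun z => GhatExt n G (-((‖ξ'‖ ^ 2 : ℝ) : ℂ) - z ^ 2) ξ' z) U := by
    intro z hz
    have hd := (key z hz).differentiableAt
    exact (hd.const_mul
      ((((2 * Real.pi) ^ (-(((n : ℝ) + 2) / 2)) : ℝ) : ℂ))).differentiableWithinAt
  have hAnalytic := hUdiff.analyticOnNhd hUopen
  have h0U : (0 : ℂ) ∈ U := by simpa [hU] using hc
  have hreal : ∀ x : ℝ, GhatExt n G (-((‖ξ'‖ ^ 2 : ℝ) : ℂ) - (x : ℂ) ^ 2) ξ' (x : ℂ) = 0 := by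
    intro x
    have h := hvanish ξ' x
    have e : ((-(‖ξ'‖ ^ 2 + x ^ 2) : ℝ) : ℂ) = -((‖ξ'‖ ^ 2 : ℝ) : ℂ) - (x : ℂ) ^ 2 := by
      push_cast; ring
    rwa [e] at h
  have hseq : Filter.Tendsto (fun k : ℕ => ((1 / (k + 1) : ℝ) : ℂ)) Filter.atTop
      (nhdsWithin 0 {(0 : ℂ)}ᶜ) := by
    rw [tendsto_nhdsWithin_iff]
    constructor
    · have h1 := Complex.continuous_ofReal.tendsto (0 : ℝ)
      have h2 := tendsto_one_div_add_atTop_nhds_zero_nat (𝕜 := ℝ)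
      simpa [Function.comp_def] using h1.comp h2
    · filter_upwards with k
      simp only [Set.mem_compl_iff, Set.mem_singleton_iff]
      exact Complex.ofReal_ne_zero.mpr (by positivity)
  have hfreq : ∃ᶠ z in nhdsWithin 0 {(0 : ℂ)}ᶜ,
      (fun z => GhatExt n G (-((‖ξ'‖ ^ 2 : ℝ) : ℂ) - z ^ 2) ξ' z) z = 0 :=
    hseq.frequently (Filter.Frequently.of_forall fun k => hreal _)
  have hEq := hAnalytic.eqOn_zero_of_preconnected_of_frequently_eq_zero
    hUconv.isPreconnected h0U hfreq
  have := hEq (show ζ₀ ∈ U from hζ₀)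
  simpa using this
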